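/- As ν ↓ 0, the conditional law of the pair (ν^{−1}U, W) given the event {|U| ≤ ν} converges weakly to the product measure of the uniform distribution on [−1, 1] and G; in particular, in the limit the two components are independent, the first is uniform on [−1, 1], and the second has law G. -/

import Mathlib

open MeasureTheory ProbabilityTheory Filter Topology
open scoped ProbabilityTheory ENNReal NNReal

private lemma subst_scale (F : ℝ → ℝ) {ν : ℝ} (hν : 0 < ν) :
    ∫ u in Set.Icc (-ν) ν, F u = ν * ∫ t in Set.Icc (-1 : ℝ) 1, F (ν * t) := by
  have hmem : ∀ t : ℝ, ν * t ∈ Set.Icc (-ν) ν ↔ t ∈ Set.Icc (-1 : ℝ) 1 := by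
    intro t
    simp only [Set.mem_Icc]
    constructor
    · rintro ⟨h1, h2⟩
      constructor <;> nlinarith
    · rintro ⟨h1, h2⟩
      constructor <;> nlinarith
  rw [← integral_indicator measurableSet_Icc, ← integral_indicator measurableSet_Icc]
  have h := MeasureTheory.Measure.integral_comp_mul_left
      (Set.indicator (Set.Icc (-ν) ν) F) ν
  have he : (fun t : ℝ => Set.indicator (Set.Icc (-ν) ν) F (ν * t))
      = Set.indicator (Set.Icc (-1 : ℝ) 1) (fun t => F (ν * t)) := by
    funext t
    by_cases ht : t ∈ Set.Icc (-1 : ℝ) 1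
    · rw [Set.indicator_of_mem ((hmem t).mpr ht), Set.indicator_of_mem ht]
    · rw [Set.indicator_of_notMem (fun h' => ht ((hmem t).mp h')),
        Set.indicator_of_notMem ht]
  rw [he] at h
  rw [h, abs_of_pos (inv_pos.2 hν), smul_eq_mul, mul_inv_cancel_left₀ hν.ne']

theorem conditional_law_near_zero_tendsto_uniform_prod
    (m : ℕ) (hm : 1 ≤ m) {Ω : Type*} [MeasurableSpace Ω]
    (P : Measure Ω) [IsProbabilityMeasure P]
    (U : Ω → ℝ) (W : Ω → EuclideanSpace ℝ (Fin m))
    (hU : Measurable U) (hW : Measurable W)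
    (f : ℝ → ℝ) (hfnn : ∀ x, 0 ≤ f x)
    (hfdens : Measure.map U P = volume.withDensity fun x => ENNReal.ofReal (f x))
    (hfcont : ContinuousAt f 0) (hfpos : 0 < f 0)
    (κ : Kernel ℝ (EuclideanSpace ℝ (Fin m))) [IsMarkovKernel κ]
    (hκ : Measure.map (fun ω => (U ω, W ω)) P = (Measure.map U P) ⊗ₘ κ)
    (G : Measure (EuclideanSpace ℝ (Fin m))) [IsProbabilityMeasure G]
    (hκG : ∀ g : BoundedContinuousFunction (EuclideanSpace ℝ (Fin m)) ℝ,
      Tendsto (fun u : ℝ => ∫ x, g x ∂(κ u)) (𝓝 0) (𝓝 (∫ x, g x ∂G))) :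
    ∀ g : BoundedContinuousFunction (ℝ × EuclideanSpace ℝ (Fin m)) ℝ,
      Tendsto (fun ν : ℝ => ∫ ω, g (ν⁻¹ * U ω, W ω) ∂(P[|{ω | |U ω| ≤ ν}]))
        (𝓝[>] 0)
        (𝓝 (∫ x, g x
          ∂(((2⁻¹ : ℝ≥0∞) • volume.restrict (Set.Icc (-1 : ℝ) 1)).prod G))) := by
  intro g
  have hUW : Measurable fun ω => (U ω, W ω) := hU.prodMk hW
  set μ : Measure ℝ := Measure.map U P with hμdef
  haveI : IsProbabilityMeasure μ := Measure.isProbabilityMeasure_map hU.aemeasurable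
  have hμac : μ ≪ volume := hfdens ▸ withDensity_absolutelyContinuous _ _
  set d : ℝ → ℝ≥0∞ := μ.rnDeriv volume with hddef
  have hdmeas : Measurable d := Measure.measurable_rnDeriv _ _
  have hμd : volume.withDensity d = μ := Measure.withDensity_rnDeriv_eq μ volume hμac
  set r : ℝ → ℝ := fun u => (d u).toReal with hrdef
  have hrmeas : Measurable r := hdmeas.ennreal_toReal
  have hrnn : ∀ u, 0 ≤ r u := fun u => ENNReal.toReal_nonneg
  set C : ℝ := ‖g‖ with hCdef
  have hCnn : 0 ≤ C := norm_nonneg g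
  set ψ : ℝ → ℝ → ℝ := fun u t => ∫ w, g (t, w) ∂(κ u) with hψdef
  set γ : ℝ → ℝ := fun t => ∫ w, g (t, w) ∂G with hγdef
  have hψbd : ∀ u t, |ψ u t| ≤ C := by
    intro u t
    rw [← Real.norm_eq_abs]
    calc ‖∫ w, g (t, w) ∂(κ u)‖ ≤ C * ((κ u) Set.univ).toReal :=
      norm_integral_le_of_norm_le_const (ae_of_all _ fun w => g.norm_coe_le_norm (t, w))
    _ = C := by simp
  have hγbd : ∀ t, |γ t| ≤ C := by
    intro t
    rw [← Real.norm_eq_abs]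
    calc ‖∫ w, g (t, w) ∂G‖ ≤ C * (G Set.univ).toReal :=
      norm_integral_le_of_norm_le_const (ae_of_all _ fun w => g.norm_coe_le_norm (t, w))
    _ = C := by simp
  -- strong measurability of the kernel integrals
  have hgsm : StronglyMeasurable fun p : ℝ × EuclideanSpace ℝ (Fin m) => g p :=
    g.continuous.stronglyMeasurable
  have hΨsm : ∀ ν : ℝ, StronglyMeasurable (fun t => ψ (ν * t) t) := by
    intro ν
    have h := MeasureTheory.StronglyMeasurable.integral_kernel_prod_right'
      (κ := κ.comap (fun t : ℝ => ν * t) (measurable_const_mul ν)) hgsm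
    simpa only [Kernel.comap_apply] using h
  have hγsm : StronglyMeasurable γ := by
    have h := MeasureTheory.StronglyMeasurable.integral_kernel_prod_right'
      (κ := Kernel.const ℝ G) hgsm
    simpa only [Kernel.const_apply] using h
  set N : ℝ → ℝ := fun ν => ∫ t in Set.Icc (-1 : ℝ) 1, r (ν * t) * ψ (ν * t) t with hNdef
  set D : ℝ → ℝ := fun ν => ∫ t in Set.Icc (-1 : ℝ) 1, r (ν * t) with hDdef
  set S : ℝ := ∫ t in Set.Icc (-1 : ℝ) 1, γ t with hSdef
  -- Part I : the identity
  have hEq : ∀ᶠ ν in 𝓝[>] (0 : ℝ),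
      ∫ ω, g (ν⁻¹ * U ω, W ω) ∂(P[|{ω | |U ω| ≤ ν}]) = (D ν)⁻¹ * N ν := by
    filter_upwards [self_mem_nhdsWithin] with ν hν
    rw [Set.mem_Ioi] at hν
    have hAν : {ω | |U ω| ≤ ν} = U ⁻¹' (Set.Icc (-ν) ν) := by
      ext ω; simp [abs_le, Set.mem_Icc]
    have hAν' : U ⁻¹' (Set.Icc (-ν) ν)
        = (fun ω => (U ω, W ω)) ⁻¹' ((Set.Icc (-ν) ν) ×ˢ Set.univ) := by
      ext ω; simp
    -- the transformed test function
    set gν : BoundedContinuousFunction (ℝ × EuclideanSpace ℝ (Fin m)) ℝ :=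
      g.compContinuous ⟨fun p => (ν⁻¹ * p.1, p.2),
        (continuous_const.mul continuous_fst).prodMk continuous_snd⟩ with hgνdef
    have hgν : ∀ p : ℝ × EuclideanSpace ℝ (Fin m), gν p = g (ν⁻¹ * p.1, p.2) :=
      fun p => rfl
    -- step 1 : conditional measure
    rw [ProbabilityTheory.cond, integral_smul_measure]
    -- step 2 : push forward
    have h2 : ∫ ω, g (ν⁻¹ * U ω, W ω) ∂(P.restrict {ω | |U ω| ≤ ν})
        = ∫ p in (Set.Icc (-ν) ν) ×ˢ Set.univ, gν p ∂(Measure.map (fun ω => (U ω, W ω)) P) := by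
      rw [setIntegral_map (measurableSet_Icc.prod MeasurableSet.univ)
        gν.continuous.measurable.aestronglyMeasurable hUW.aemeasurable]
      rw [hAν, hAν']
      rfl
    -- step 3 : disintegrate
    have h3 : ∫ p in (Set.Icc (-ν) ν) ×ˢ Set.univ, gν p ∂(Measure.map (fun ω => (U ω, W ω)) P)
        = ∫ u in Set.Icc (-ν) ν, ∫ w, g (ν⁻¹ * u, w) ∂(κ u) ∂μ := by
      rw [hκ, Measure.setIntegral_compProd measurableSet_Icc MeasurableSet.univ
        ((gν.integrable _).integrableOn)]
      simp only [Measure.restrict_univ, hgν]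
    -- step 4 : with density
    set d' : ℝ → ℝ≥0 := fun u => (d u).toNNReal with hd'def
    have hd'meas : Measurable d' := hdmeas.ennreal_toNNReal
    have hμd' : volume.withDensity (fun u => (d' u : ℝ≥0∞)) = μ := by
      rw [← hμd]
      refine withDensity_congr_ae ?_
      filter_upwards [Measure.rnDeriv_lt_top μ volume] with u hu
      exact ENNReal.coe_toNNReal hu.ne
    have h4 : ∀ F : ℝ → ℝ, ∫ u in Set.Icc (-ν) ν, F u ∂μ
        = ∫ u in Set.Icc (-ν) ν, r u * F u := by
      intro F
      rw [← hμd', setIntegral_withDensity_eq_setIntegral_smul hd'meas _ measurableSet_Icc]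
      rfl
    -- step 5 : the numerator
    have h5 : ∫ ω, g (ν⁻¹ * U ω, W ω) ∂(P.restrict {ω | |U ω| ≤ ν}) = ν * N ν := by
      rw [h2, h3, h4, subst_scale _ hν, hNdef]
      congr 1
      refine setIntegral_congr_fun measurableSet_Icc (fun t _ => ?_)
      rw [inv_mul_cancel_left₀ hν.ne']
    -- step 6 : the denominator
    have h6 : (P {ω | |U ω| ≤ ν}).toReal = ν * D ν := by
      have hPA : P {ω | |U ω| ≤ ν} = μ (Set.Icc (-ν) ν) := by
        rw [hAν, hμdef, Measure.map_apply hU measurableSet_Icc]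
      have hlint : μ (Set.Icc (-ν) ν) = ∫⁻ u in Set.Icc (-ν) ν, d u ∂volume := by
        rw [← hμd, withDensity_apply _ measurableSet_Icc]
      have htoReal : (∫⁻ u in Set.Icc (-ν) ν, d u ∂volume).toReal
          = ∫ u in Set.Icc (-ν) ν, r u := by
        rw [← integral_toReal hdmeas.aemeasurable
          (ae_restrict_of_ae (Measure.rnDeriv_lt_top μ volume))]
      rw [hPA, hlint, htoReal, subst_scale _ hν, hDdef]
    rw [h5, ENNReal.toReal_inv, h6, smul_eq_mul, mul_inv, mul_comm ν⁻¹,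
      mul_assoc, inv_mul_cancel_left₀ hν.ne']
  -- Part II : the limits
  -- Key a.e. density estimate
  have hkey : ∀ ε : ℝ, 0 < ε → ∀ᶠ ν in 𝓝[>] (0 : ℝ),
      ∀ᵐ t ∂(volume.restrict (Set.Icc (-1 : ℝ) 1)), |r (ν * t) - f 0| ≤ ε := by
    intro ε hε
    obtain ⟨δ0, hδ0, hδ⟩ := Metric.continuousAt_iff.mp hfcont ε hε
    set δ : ℝ := δ0 / 2 with hδdef
    have hδpos : 0 < δ := by positivity
    have hf_close : ∀ u : ℝ, |u| ≤ δ → |f u - f 0| ≤ ε := by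
      intro u hu
      have h1 : dist u 0 < δ0 := by
        rw [Real.dist_eq, sub_zero]
        calc |u| ≤ δ := hu
        _ < δ0 := by rw [hδdef]; linarith
      have := hδ h1
      rw [Real.dist_eq] at this
      exact this.le
    have hup : d ≤ᵐ[volume.restrict (Set.Icc (-δ) δ)]
        (fun _ => ENNReal.ofReal (f 0 + ε)) := by
      refine ae_le_of_forall_setLIntegral_le_of_sigmaFinite hdmeas (fun A hA _ => ?_)
      have hAs : MeasurableSet (A ∩ Set.Icc (-δ) δ) := hA.inter measurableSet_Icc
      rw [Measure.restrict_restrict hA]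
      have e1 : ∫⁻ x in A ∩ Set.Icc (-δ) δ, d x ∂volume = μ (A ∩ Set.Icc (-δ) δ) := by
        rw [← hμd, withDensity_apply _ hAs]
      have e2 : μ (A ∩ Set.Icc (-δ) δ)
          = ∫⁻ x in A ∩ Set.Icc (-δ) δ, ENNReal.ofReal (f x) ∂volume := by
        rw [hfdens, withDensity_apply _ hAs]
      rw [e1, e2]
      refine lintegral_mono_ae ?_
      filter_upwards [ae_restrict_mem hAs] with x hx
      refine ENNReal.ofReal_le_ofReal ?_
      have hfx := hf_close x (abs_le.2 ⟨hx.2.1, hx.2.2⟩)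
      have := abs_le.1 hfx
      linarith [this.1, this.2]
    have hlo : (fun _ : ℝ => ENNReal.ofReal (f 0 - ε)) ≤ᵐ[volume.restrict (Set.Icc (-δ) δ)] d := by
      refine ae_le_of_forall_setLIntegral_le_of_sigmaFinite measurable_const (fun A hA _ => ?_)
      have hAs : MeasurableSet (A ∩ Set.Icc (-δ) δ) := hA.inter measurableSet_Icc
      rw [Measure.restrict_restrict hA]
      have e1 : ∫⁻ x in A ∩ Set.Icc (-δ) δ, d x ∂volume = μ (A ∩ Set.Icc (-δ) δ) := by
        rw [← hμd, withDensity_apply _ hAs]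
      have e2 : μ (A ∩ Set.Icc (-δ) δ)
          = ∫⁻ x in A ∩ Set.Icc (-δ) δ, ENNReal.ofReal (f x) ∂volume := by
        rw [hfdens, withDensity_apply _ hAs]
      rw [e1, e2]
      refine lintegral_mono_ae ?_
      filter_upwards [ae_restrict_mem hAs] with x hx
      refine ENNReal.ofReal_le_ofReal ?_
      have hfx := hf_close x (abs_le.2 ⟨hx.2.1, hx.2.2⟩)
      have := abs_le.1 hfx
      linarith [this.1, this.2]
    have hae : ∀ᵐ u ∂(volume.restrict (Set.Icc (-δ) δ)), |r u - f 0| ≤ ε := by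
      filter_upwards [hup, hlo, ae_restrict_of_ae (Measure.rnDeriv_lt_top μ volume)]
        with u h1 h2 h3
      have hne : d u ≠ ⊤ := h3.ne
      have hub : r u ≤ f 0 + ε := by
        have h' := ENNReal.toReal_mono ENNReal.ofReal_ne_top h1
        rwa [ENNReal.toReal_ofReal (by linarith)] at h'
      have hlb : f 0 - ε ≤ r u := by
        have h2' := ENNReal.toReal_mono hne h2
        calc f 0 - ε ≤ max (f 0 - ε) 0 := le_max_left _ _
        _ = (ENNReal.ofReal (f 0 - ε)).toReal := ENNReal.toReal_ofReal'.symm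
        _ ≤ r u := h2'
      rw [abs_le]
      exact ⟨by linarith, by linarith⟩
    have hae' : ∀ᵐ u ∂(volume : Measure ℝ), u ∈ Set.Icc (-δ) δ → |r u - f 0| ≤ ε :=
      (ae_restrict_iff' measurableSet_Icc).mp hae
    filter_upwards [Ioc_mem_nhdsGT hδpos] with ν hν
    have hν0 : 0 < ν := hν.1
    have hpull : ∀ᵐ t ∂(volume : Measure ℝ),
        (ν * t ∈ Set.Icc (-δ) δ → |r (ν * t) - f 0| ≤ ε) := by
      rw [ae_iff] at hae' ⊢
      have hset : {t : ℝ | ¬(ν * t ∈ Set.Icc (-δ) δ → |r (ν * t) - f 0| ≤ ε)}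
          = (ν * ·) ⁻¹' {u : ℝ | ¬(u ∈ Set.Icc (-δ) δ → |r u - f 0| ≤ ε)} := rfl
      rw [hset, Real.volume_preimage_mul_left hν0.ne', hae', mul_zero]
    refine (ae_restrict_of_ae hpull).mp ((ae_restrict_mem measurableSet_Icc).mono ?_)
    intro t ht h
    apply h
    have habs : |ν * t| ≤ δ := by
      rw [abs_mul, abs_of_pos hν0]
      rcases Set.mem_Icc.mp ht with ⟨ht1, ht2⟩
      have h1 : |t| ≤ 1 := abs_le.2 ⟨ht1, ht2⟩
      nlinarith [hν.2]
    exact Set.mem_Icc.2 (abs_le.1 habs)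
  -- the integrated density error tends to zero
  have hconst2 : ∀ c : ℝ, ∫ _ in Set.Icc (-1 : ℝ) 1, c = 2 * c := by
    intro c
    rw [setIntegral_const, measureReal_def, Real.volume_Icc]
    norm_num
  have hR : Tendsto (fun ν => ∫ t in Set.Icc (-1 : ℝ) 1, |r (ν * t) - f 0|)
      (𝓝[>] (0 : ℝ)) (𝓝 0) := by
    rw [Metric.tendsto_nhds]
    intro ε hε
    filter_upwards [hkey (ε / 4) (by positivity)] with ν hb
    have hmeas : AEStronglyMeasurable (fun t => |r (ν * t) - f 0|)
        (volume.restrict (Set.Icc (-1 : ℝ) 1)) :=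
      (((hrmeas.comp (measurable_const_mul ν)).sub measurable_const).abs).aestronglyMeasurable
    have hint : Integrable (fun t => |r (ν * t) - f 0|)
        (volume.restrict (Set.Icc (-1 : ℝ) 1)) := by
      refine Integrable.mono' (integrable_const (ε / 4)) hmeas ?_
      filter_upwards [hb] with t ht
      rwa [Real.norm_eq_abs, abs_abs]
    have h1 : ∫ t in Set.Icc (-1 : ℝ) 1, |r (ν * t) - f 0|
        ≤ ∫ _ in Set.Icc (-1 : ℝ) 1, (ε / 4 : ℝ) :=
      integral_mono_ae hint (integrable_const _) hb
    have h0 : 0 ≤ ∫ t in Set.Icc (-1 : ℝ) 1, |r (ν * t) - f 0| :=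
      integral_nonneg fun t => abs_nonneg _
    rw [Real.dist_eq, sub_zero, abs_of_nonneg h0]
    calc ∫ t in Set.Icc (-1 : ℝ) 1, |r (ν * t) - f 0| ≤ 2 * (ε / 4) := (hconst2 _) ▸ h1
    _ < ε := by linarith
  -- the kernel weak-convergence error tends to zero
  have hDψ : Tendsto (fun ν => ∫ t in Set.Icc (-1 : ℝ) 1, |ψ (ν * t) t - γ t|)
      (𝓝[>] (0 : ℝ)) (𝓝 0) := by
    have h := MeasureTheory.tendsto_integral_filter_of_dominated_convergence
      (μ := volume.restrict (Set.Icc (-1 : ℝ) 1)) (l := 𝓝[>] (0 : ℝ))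
      (F := fun ν t => |ψ (ν * t) t - γ t|) (f := fun _ => (0 : ℝ)) (bound := fun _ => 2 * C)
      (Eventually.of_forall fun ν =>
        ((((hΨsm ν).measurable.sub hγsm.measurable).abs).aestronglyMeasurable))
      (Eventually.of_forall fun ν => ae_of_all _ fun t => by
        rw [Real.norm_eq_abs, abs_abs]
        calc |ψ (ν * t) t - γ t| ≤ |ψ (ν * t) t| + |γ t| := abs_sub _ _
        _ ≤ C + C := add_le_add (hψbd _ _) (hγbd _)
        _ = 2 * C := by ring)
      (integrable_const _)
      (ae_of_all _ fun t => ?_)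
    · simpa using h
    · have h1 : Tendsto (fun ν : ℝ => ν * t) (𝓝[>] (0 : ℝ)) (𝓝 0) := by
        have h' : Tendsto (fun ν : ℝ => ν * t) (𝓝 (0 : ℝ)) (𝓝 (0 * t)) :=
          (continuous_id.mul continuous_const).tendsto 0
        rw [zero_mul] at h'
        exact h'.mono_left nhdsWithin_le_nhds
      have h2 : Tendsto (fun u => ψ u t) (𝓝 (0 : ℝ)) (𝓝 (γ t)) := by
        have := hκG (g.compContinuous ⟨fun w => (t, w), Continuous.prodMk_right t⟩)
        simpa using this
      have h3 : Tendsto (fun ν : ℝ => |ψ (ν * t) t - γ t|) (𝓝[>] (0 : ℝ))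
          (𝓝 |γ t - γ t|) := ((h2.comp h1).sub tendsto_const_nhds).abs
      simpa using h3
  have hD : Tendsto D (𝓝[>] (0 : ℝ)) (𝓝 (2 * f 0)) := by
    rw [tendsto_iff_dist_tendsto_zero]
    refine squeeze_zero' (Eventually.of_forall fun ν => dist_nonneg) ?_ hR
    filter_upwards [hkey 1 one_pos] with ν hb
    have hmeas : AEStronglyMeasurable (fun t => r (ν * t))
        (volume.restrict (Set.Icc (-1 : ℝ) 1)) :=
      (hrmeas.comp (measurable_const_mul ν)).aestronglyMeasurable
    have hint : Integrable (fun t => r (ν * t)) (volume.restrict (Set.Icc (-1 : ℝ) 1)) := by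
      refine Integrable.mono' (integrable_const (f 0 + 1)) hmeas ?_
      filter_upwards [hb] with t ht
      rw [Real.norm_eq_abs, abs_of_nonneg (hrnn _)]
      linarith [(abs_le.1 ht).2]
    rw [Real.dist_eq]
    have hsub : D ν - 2 * f 0 = ∫ t in Set.Icc (-1 : ℝ) 1, (r (ν * t) - f 0) := by
      rw [integral_sub hint (integrable_const _), hconst2, hDdef]
    rw [hsub]
    calc |∫ t in Set.Icc (-1 : ℝ) 1, (r (ν * t) - f 0)|
        ≤ ∫ t in Set.Icc (-1 : ℝ) 1, |r (ν * t) - f 0| := by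
          rw [← Real.norm_eq_abs]
          exact (norm_integral_le_integral_norm _).trans (le_of_eq (by simp [Real.norm_eq_abs]))
    _ ≤ ∫ t in Set.Icc (-1 : ℝ) 1, |r (ν * t) - f 0| := le_rfl
  have hN : Tendsto N (𝓝[>] (0 : ℝ)) (𝓝 (f 0 * S)) := by
    rw [tendsto_iff_dist_tendsto_zero]
    have hlim : Tendsto (fun ν => (f 0 + 1) * (∫ t in Set.Icc (-1 : ℝ) 1, |ψ (ν * t) t - γ t|)
        + C * (∫ t in Set.Icc (-1 : ℝ) 1, |r (ν * t) - f 0|)) (𝓝[>] (0 : ℝ)) (𝓝 0) := by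
      have := (hDψ.const_mul (f 0 + 1)).add (hR.const_mul C)
      simpa using this
    refine squeeze_zero' (Eventually.of_forall fun ν => dist_nonneg) ?_ hlim
    filter_upwards [hkey 1 one_pos] with ν hb
    have hrbd : ∀ᵐ t ∂(volume.restrict (Set.Icc (-1 : ℝ) 1)), r (ν * t) ≤ f 0 + 1 := by
      filter_upwards [hb] with t ht
      linarith [(abs_le.1 ht).2]
    have hγmeas : AEStronglyMeasurable γ (volume.restrict (Set.Icc (-1 : ℝ) 1)) :=
      hγsm.aestronglyMeasurable
    have hγint : Integrable γ (volume.restrict (Set.Icc (-1 : ℝ) 1)) :=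
      Integrable.mono' (integrable_const C) hγmeas
        (ae_of_all _ fun t => by rw [Real.norm_eq_abs]; exact hγbd t)
    have hameas : AEStronglyMeasurable (fun t => r (ν * t) * ψ (ν * t) t)
        (volume.restrict (Set.Icc (-1 : ℝ) 1)) :=
      ((hrmeas.comp (measurable_const_mul ν)).aestronglyMeasurable).mul
        (hΨsm ν).aestronglyMeasurable
    have haint : Integrable (fun t => r (ν * t) * ψ (ν * t) t)
        (volume.restrict (Set.Icc (-1 : ℝ) 1)) := by
      refine Integrable.mono' (integrable_const ((f 0 + 1) * C)) hameas ?_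
      filter_upwards [hrbd] with t ht
      rw [Real.norm_eq_abs, abs_mul, abs_of_nonneg (hrnn _)]
      exact mul_le_mul ht (hψbd _ _) (abs_nonneg _) (by linarith)
    have hbint : Integrable (fun t => f 0 * γ t) (volume.restrict (Set.Icc (-1 : ℝ) 1)) :=
      hγint.const_mul _
    have hfS : f 0 * S = ∫ t in Set.Icc (-1 : ℝ) 1, f 0 * γ t := by
      rw [MeasureTheory.integral_const_mul, hSdef]
    rw [Real.dist_eq]
    have hsub : N ν - f 0 * S
        = ∫ t in Set.Icc (-1 : ℝ) 1, (r (ν * t) * ψ (ν * t) t - f 0 * γ t) := by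
      rw [integral_sub haint hbint, ← hfS, hNdef]
    rw [hsub]
    have hptw : ∀ᵐ t ∂(volume.restrict (Set.Icc (-1 : ℝ) 1)),
        |r (ν * t) * ψ (ν * t) t - f 0 * γ t|
          ≤ (f 0 + 1) * |ψ (ν * t) t - γ t| + C * |r (ν * t) - f 0| := by
      filter_upwards [hrbd] with t ht
      have key : r (ν * t) * ψ (ν * t) t - f 0 * γ t
          = r (ν * t) * (ψ (ν * t) t - γ t) + (r (ν * t) - f 0) * γ t := by ring
      rw [key]
      calc |r (ν * t) * (ψ (ν * t) t - γ t) + (r (ν * t) - f 0) * γ t|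
          ≤ |r (ν * t) * (ψ (ν * t) t - γ t)| + |(r (ν * t) - f 0) * γ t| := abs_add_le _ _
      _ = r (ν * t) * |ψ (ν * t) t - γ t| + |r (ν * t) - f 0| * |γ t| := by
          rw [abs_mul, abs_mul, abs_of_nonneg (hrnn _)]
      _ ≤ (f 0 + 1) * |ψ (ν * t) t - γ t| + |r (ν * t) - f 0| * C :=
          add_le_add (mul_le_mul_of_nonneg_right ht (abs_nonneg _))
            (mul_le_mul_of_nonneg_left (hγbd t) (abs_nonneg _))
      _ = (f 0 + 1) * |ψ (ν * t) t - γ t| + C * |r (ν * t) - f 0| := by ring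
    have hint1 : Integrable (fun t => |ψ (ν * t) t - γ t|)
        (volume.restrict (Set.Icc (-1 : ℝ) 1)) := by
      refine Integrable.mono' (integrable_const (2 * C))
        ((((hΨsm ν).measurable.sub hγsm.measurable).abs).aestronglyMeasurable)
        (ae_of_all _ fun t => ?_)
      rw [Real.norm_eq_abs, abs_abs]
      calc |ψ (ν * t) t - γ t| ≤ |ψ (ν * t) t| + |γ t| := abs_sub _ _
      _ ≤ C + C := add_le_add (hψbd _ _) (hγbd _)
      _ = 2 * C := by ring
    have hint2 : Integrable (fun t => |r (ν * t) - f 0|)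
        (volume.restrict (Set.Icc (-1 : ℝ) 1)) := by
      refine Integrable.mono' (integrable_const 1)
        ((((hrmeas.comp (measurable_const_mul ν)).sub measurable_const).abs).aestronglyMeasurable)
        ?_
      filter_upwards [hb] with t ht
      rwa [Real.norm_eq_abs, abs_abs]
    calc |∫ t in Set.Icc (-1 : ℝ) 1, (r (ν * t) * ψ (ν * t) t - f 0 * γ t)|
        ≤ ∫ t in Set.Icc (-1 : ℝ) 1, |r (ν * t) * ψ (ν * t) t - f 0 * γ t| := by
          rw [← Real.norm_eq_abs]
          exact (norm_integral_le_integral_norm _).trans (le_of_eq (by simp [Real.norm_eq_abs]))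
    _ ≤ ∫ t in Set.Icc (-1 : ℝ) 1,
          ((f 0 + 1) * |ψ (ν * t) t - γ t| + C * |r (ν * t) - f 0|) :=
        integral_mono_ae (haint.sub hbint).abs
          ((hint1.const_mul _).add (hint2.const_mul _)) hptw
    _ = (f 0 + 1) * (∫ t in Set.Icc (-1 : ℝ) 1, |ψ (ν * t) t - γ t|)
          + C * (∫ t in Set.Icc (-1 : ℝ) 1, |r (ν * t) - f 0|) := by
        rw [integral_add (hint1.const_mul _) (hint2.const_mul _),
          MeasureTheory.integral_const_mul, MeasureTheory.integral_const_mul]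
  -- Part III : conclusion
  have hRHS : (∫ x, g x
      ∂(((2⁻¹ : ℝ≥0∞) • volume.restrict (Set.Icc (-1 : ℝ) 1)).prod G))
      = (2 * f 0)⁻¹ * (f 0 * S) := by
    haveI : IsFiniteMeasure ((2⁻¹ : ℝ≥0∞) • volume.restrict (Set.Icc (-1 : ℝ) 1)) := by
      constructor
      rw [Measure.smul_apply, Measure.restrict_apply MeasurableSet.univ, Set.univ_inter,
        Real.volume_Icc, smul_eq_mul]
      exact ENNReal.mul_lt_top (by norm_num) ENNReal.ofReal_lt_top
    rw [MeasureTheory.integral_prod _ (g.integrable _), integral_smul_measure]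
    have h1 : ((2⁻¹ : ℝ≥0∞)).toReal = (2⁻¹ : ℝ) := by simp
    rw [h1, smul_eq_mul]
    have h2 : (∫ t, ∫ w, g (t, w) ∂G ∂(volume.restrict (Set.Icc (-1 : ℝ) 1))) = S := rfl
    rw [h2, mul_inv, mul_assoc, inv_mul_cancel_left₀ hfpos.ne']
  rw [hRHS]
  exact Tendsto.congr' (hEq.mono fun ν h => h.symm)
    ((hD.inv₀ (by positivity)).mul hN)
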